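/- The discrete difference of reciprocal weight products satisfies 1/(W_{j+3/2} W_{j+1/2}) − 1/(W_{j+1/2} W_{j−1/2}) ≤ 2 Δx ‖ω′‖_{L¹} / (W_{j+3/2} W_{j+1/2} W_{j−1/2}), where W_{j+1/2} = Δx ∑_{β=1}^N ω((β−j−1/2)Δx) are the discrete kernel weights (assumed positive). -/

import Mathlib

open MeasureTheory

private lemma sum_setInt_le (g : ℝ → ℝ) (hg : Integrable g) (hg0 : ∀ x, 0 ≤ g x)
    (l : ℤ → ℝ) (d : ℝ) (hd : 0 ≤ d)
    (hmono : ∀ β β' : ℤ, β < β' → l β + d ≤ l β') (s : Finset ℤ) :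
    ∑ β ∈ s, ∫ x in Set.Ioc (l β) (l β + d), g x ≤ ∫ x, g x := by
  have hmeas : ∀ β ∈ s, MeasurableSet (Set.Ioc (l β) (l β + d)) := fun _ _ => measurableSet_Ioc
  have hdisj : Set.Pairwise (↑s) (Function.onFun Disjoint fun β => Set.Ioc (l β) (l β + d)) := by
    intro β _ β' _ hne
    rcases lt_or_gt_of_ne hne with h | h
    · simp only [Function.onFun, Set.Ioc_disjoint_Ioc]
      exact le_trans (min_le_left _ _) (le_trans (hmono _ _ h) (le_max_right _ _))
    · simp only [Function.onFun, Set.Ioc_disjoint_Ioc]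
      exact le_trans (min_le_right _ _) (le_trans (hmono _ _ h) (le_max_left _ _))
  have hint : ∀ β ∈ s, IntegrableOn g (Set.Ioc (l β) (l β + d)) volume :=
    fun β _ => hg.integrableOn
  rw [← integral_biUnion_finset s hmeas hdisj hint]
  exact setIntegral_le_integral hg (Filter.Eventually.of_forall hg0)

theorem stmt19
    (Δx : ℝ) (hΔx : 0 < Δx) (N : ℕ)
    (ω : ℝ → ℝ) (hω : ContDiff ℝ 1 ω)
    (hω'int : Integrable (deriv ω))
    (W : ℤ → ℝ)
    (hW : ∀ j, W j = Δx * ∑ β ∈ Finset.Icc (1 : ℤ) (N : ℤ),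
        ω (((β : ℝ) - (j : ℝ) - 1 / 2) * Δx))
    (j : ℤ)
    (hWpos : ∀ i ∈ ({j - 1, j, j + 1} : Set ℤ), 0 < W i) :
    1 / (W (j + 1) * W j) - 1 / (W j * W (j - 1)) ≤
      2 * Δx * (∫ y, |deriv ω y|) / (W (j + 1) * W j * W (j - 1)) := by
  have ha : 0 < W (j + 1) := hWpos _ (by simp)
  have hb : 0 < W j := hWpos _ (by simp)
  have hc : 0 < W (j - 1) := hWpos _ (by simp)
  set I := ∫ y, |deriv ω y| with hI
  have habs : Integrable (fun y => |deriv ω y|) := hω'int.abs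
  -- key inequality
  set l : ℤ → ℝ := fun β => ((β : ℝ) - (j : ℝ) - 3 / 2) * Δx with hl
  have key : W (j - 1) - W (j + 1) ≤ 2 * Δx * I := by
    rw [hW, hW, ← mul_sub, ← Finset.sum_sub_distrib]
    have hterm : ∀ β ∈ Finset.Icc (1 : ℤ) (N : ℤ),
        ω (((β : ℝ) - ((j : ℤ) - 1 : ℤ) - 1 / 2) * Δx) -
          ω (((β : ℝ) - ((j : ℤ) + 1 : ℤ) - 1 / 2) * Δx)
        ≤ (∫ x in Set.Ioc (l β) (l β + Δx), |deriv ω x|) +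
          ∫ x in Set.Ioc (l β + Δx) (l β + Δx + Δx), |deriv ω x| := by
      intro β _
      have h1 : (((β : ℝ) - ((j : ℤ) + 1 : ℤ) - 1 / 2) * Δx) = l β := by
        push_cast [hl]; ring
      have h2 : (((β : ℝ) - ((j : ℤ) - 1 : ℤ) - 1 / 2) * Δx) = l β + Δx + Δx := by
        push_cast [hl]; ring
      rw [h1, h2]
      have hle1 : l β ≤ l β + Δx := by linarith
      have hle2 : l β + Δx ≤ l β + Δx + Δx := by linarith
      have hftc : ∫ y in (l β)..(l β + Δx + Δx), deriv ω y
          = ω (l β + Δx + Δx) - ω (l β) := by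
        apply intervalIntegral.integral_deriv_eq_sub
        · exact fun x _ => (hω.differentiable one_ne_zero).differentiableAt
        · exact hω'int.intervalIntegrable
      have hle : ω (l β + Δx + Δx) - ω (l β)
          ≤ ∫ y in (l β)..(l β + Δx + Δx), |deriv ω y| := by
        rw [← hftc]
        calc ∫ y in (l β)..(l β + Δx + Δx), deriv ω y
            ≤ |∫ y in (l β)..(l β + Δx + Δx), deriv ω y| := le_abs_self _
          _ ≤ ∫ y in (l β)..(l β + Δx + Δx), |deriv ω y| :=
              intervalIntegral.abs_integral_le_integral_abs (by linarith)
      have hsplit : ∫ y in (l β)..(l β + Δx + Δx), |deriv ω y|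
          = (∫ y in (l β)..(l β + Δx), |deriv ω y|)
            + ∫ y in (l β + Δx)..(l β + Δx + Δx), |deriv ω y| :=
        (intervalIntegral.integral_add_adjacent_intervals
          habs.intervalIntegrable habs.intervalIntegrable).symm
      rw [hsplit, intervalIntegral.integral_of_le hle1,
        intervalIntegral.integral_of_le hle2] at hle
      exact hle
    have hsum := Finset.sum_le_sum hterm
    have hsum2 : ∑ β ∈ Finset.Icc (1 : ℤ) (N : ℤ),
        ((∫ x in Set.Ioc (l β) (l β + Δx), |deriv ω x|) +
          ∫ x in Set.Ioc (l β + Δx) (l β + Δx + Δx), |deriv ω x|) ≤ 2 * I := by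
      rw [Finset.sum_add_distrib]
      have hA := sum_setInt_le (fun y => |deriv ω y|) habs (fun x => abs_nonneg _)
        l Δx hΔx.le (by
          intro β β' hββ'
          have : (β : ℝ) + 1 ≤ β' := by exact_mod_cast hββ'
          simp only [hl]; nlinarith) (Finset.Icc (1 : ℤ) (N : ℤ))
      have hB := sum_setInt_le (fun y => |deriv ω y|) habs (fun x => abs_nonneg _)
        (fun β => l β + Δx) Δx hΔx.le (by
          intro β β' hββ'
          have : (β : ℝ) + 1 ≤ β' := by exact_mod_cast hββ'
          simp only [hl]; nlinarith) (Finset.Icc (1 : ℤ) (N : ℤ))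
      linarith
    calc Δx * ∑ β ∈ Finset.Icc (1 : ℤ) (N : ℤ),
          (ω (((β : ℝ) - ((j : ℤ) - 1 : ℤ) - 1 / 2) * Δx) -
            ω (((β : ℝ) - ((j : ℤ) + 1 : ℤ) - 1 / 2) * Δx))
        ≤ Δx * (2 * I) := by
          apply mul_le_mul_of_nonneg_left (le_trans hsum hsum2) hΔx.le
      _ = 2 * Δx * I := by ring
  have heq : 1 / (W (j + 1) * W j) - 1 / (W j * W (j - 1))
      = (W (j - 1) - W (j + 1)) / (W (j + 1) * W j * W (j - 1)) := by
    field_simp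
  rw [heq]
  apply div_le_div_of_nonneg_right key  -- maybe wrong name
  positivity
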